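/- Let μ be a critical offspring distribution on ℤ≥0 (mean 1, μ(1) < 1) with gcd of support equal to d, and let T be a Galton-Watson tree with offspring distribution μ. Then P(#T = 1 + dn) = (1/(1+dn)) · P(S_{1+dn} = −1), where (S_n) is the random walk with i.i.d. steps distributed as the offspring minus 1. More generally, for a forest of k independent such trees, P(#F = k + dn) = (k/(k+dn)) · P(S_{k+dn} = −k). -/

import Mathlib

/-- Finite ordered (plane) trees. -/
inductive PTree : Type
  | node : List PTree → PTree

mutual
  /-- Number of vertices of a plane tree. -/
  def PTree.size : PTree → ℕ
    | .node l => 1 + PTree.sizeList l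
  def PTree.sizeList : List PTree → ℕ
    | [] => 0
    | t :: ts => PTree.size t + PTree.sizeList ts
end

mutual
  /-- Galton-Watson weight of a plane tree: product over vertices of μ(number of children). -/
  noncomputable def PTree.weight (μ : ℕ → ℝ) : PTree → ℝ
    | .node l => μ l.length * PTree.weightList μ l
  noncomputable def PTree.weightList (μ : ℕ → ℝ) : List PTree → ℝ
    | [] => 1
    | t :: ts => PTree.weight μ t * PTree.weightList μ ts
end

namespace OtterDwassAux

/-! ### Depth-first codes of forests -/

def codeF : List PTree → List ℕ
  | [] => []
  | .node l :: ts => l.length :: (codeF l ++ codeF ts)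

lemma length_codeF : ∀ f, (codeF f).length = PTree.sizeList f := by
  intro f
  induction f using codeF.induct with
  | case1 => simp [codeF, PTree.sizeList]
  | case2 l ts ih1 ih2 =>
      simp [codeF, PTree.sizeList, PTree.size, ih1, ih2]; omega

lemma sum_codeF : ∀ f, (codeF f).sum + f.length = PTree.sizeList f := by
  intro f
  induction f using codeF.induct with
  | case1 => simp [codeF, PTree.sizeList]
  | case2 l ts ih1 ih2 =>
      simp only [codeF, PTree.sizeList, PTree.size, List.sum_cons, List.sum_append,
        List.length_cons]
      omega

lemma weightList_codeF (μ : ℕ → ℝ) : ∀ f, PTree.weightList μ f = ((codeF f).map μ).prod := by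
  intro f
  induction f using codeF.induct with
  | case1 => simp [codeF, PTree.weightList]
  | case2 l ts ih1 ih2 =>
      simp [codeF, PTree.weightList, PTree.weight, ih1, ih2]; ring

/-- `c` is the depth-first code of a forest of `k` trees. -/
def IsCode (k : ℕ) (c : List ℕ) : Prop :=
  c.sum + k = c.length ∧ ∀ j < c.length, j < (c.take j).sum + k

instance (k : ℕ) (c : List ℕ) : Decidable (IsCode k c) := by
  unfold IsCode; infer_instance

lemma isCode_codeF : ∀ f, IsCode f.length (codeF f) := by
  intro f
  induction f using codeF.induct with
  | case1 => exact ⟨by simp [codeF], by simp [codeF]⟩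
  | case2 l ts ih1 ih2 =>
      obtain ⟨hs1, hp1⟩ := ih1
      obtain ⟨hs2, hp2⟩ := ih2
      constructor
      · simp only [codeF, List.sum_cons, List.sum_append, List.length_cons,
          List.length_append]
        omega
      · intro j hj
        simp only [codeF, List.length_cons, List.length_append] at hj ⊢
        match j with
        | 0 => simp
        | (i+1) =>
          simp only [List.take_succ_cons, List.sum_cons,
            List.take_append, List.sum_append, List.length_cons]
          rcases lt_or_ge i (codeF l).length with hi | hi
          · have := hp1 i hi
            have h0 : i - (codeF l).length = 0 := by omega
            rw [h0]
            simp only [List.take_zero, List.sum_nil]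
            omega
          · rw [List.take_of_length_le hi]
            have hlt : i - (codeF l).length < (codeF ts).length := by omega
            have := hp2 _ hlt
            omega

lemma exists_forest_aux : ∀ (n k : ℕ) (c : List ℕ), c.length ≤ n → IsCode k c →
    ∃ f : List PTree, f.length = k ∧ codeF f = c := by
  intro n
  induction n with
  | zero =>
      rintro k c hc ⟨hs, -⟩
      have hc0 : c = [] := List.length_eq_zero_iff.mp (by omega)
      subst hc0
      exact ⟨[], by simpa using hs.symm, by simp [codeF]⟩
  | succ n IH =>
      rintro k c hlen ⟨hs, hp⟩
      match c with
      | [] => exact ⟨[], by simpa using hs.symm, by simp [codeF]⟩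
      | m :: c' =>
        have hk : 0 < k := by simpa using hp 0 (by simp)
        simp only [List.sum_cons, List.length_cons] at hs
        have hlen' : c'.length ≤ n := by simpa using hlen
        have hex : ∃ j, (c'.take j).sum + m ≤ j := by
          refine ⟨c'.length, ?_⟩
          rw [List.take_length]
          omega
        set j := Nat.find hex with hjdef
        have hj : (c'.take j).sum + m ≤ j := Nat.find_spec hex
        have hmin : ∀ i < j, i < (c'.take i).sum + m := by
          intro i hi
          have := Nat.find_min hex hi
          omega
        have hjle : j ≤ c'.length := by
          apply Nat.find_min'
          rw [List.take_length]; omega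
        have heq : (c'.take j).sum + m = j := by
          match hj2 : j, hj, hmin with
          | 0, hj, _ => simpa using hj
          | (i+1), hj, hmin =>
            have hi : i < c'.length := by omega
            have h1 := hmin i (Nat.lt_succ_self i)
            have h2 : (c'.take (i+1)).sum = (c'.take i).sum + c'[i] :=
              List.sum_take_succ c' i hi
            omega
        set a := c'.take j with ha
        set b := c'.drop j with hb
        have hab : a ++ b = c' := List.take_append_drop j c'
        have hLa : a.length = j := by rw [ha, List.length_take]; omega
        have hLb : b.length = c'.length - j := by rw [hb, List.length_drop]
        have hsum_ab : a.sum + b.sum = c'.sum := by rw [← hab, List.sum_append]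
        have hca : IsCode m a := by
          constructor
          · rw [hLa]; exact heq
          · intro i hi
            rw [hLa] at hi
            have : a.take i = c'.take i := by
              rw [ha, List.take_take]
              congr 1
              omega
            rw [this]
            exact hmin i hi
        have hcb : IsCode (k-1) b := by
          constructor
          · omega
          · intro i hi
            have hip : 1 + (j + i) < (m :: c').length := by
              simp only [List.length_cons]; omega
            have := hp _ hip
            rw [show (1 + (j+i)) = (j+i) + 1 by omega] at this
            rw [List.take_succ_cons, List.take_add, List.sum_cons, List.sum_append] at this
            rw [← ha, ← hb] at this
            omega
        obtain ⟨l, hl1, hl2⟩ := IH m a (by omega) hca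
        obtain ⟨ts, ht1, ht2⟩ := IH (k-1) b (by omega) hcb
        refine ⟨.node l :: ts, by simp [ht1]; omega, ?_⟩
        rw [codeF, hl1, hl2, ht2, hab]

lemma exists_forest {k : ℕ} {c : List ℕ} (h : IsCode k c) :
    ∃ f : List PTree, f.length = k ∧ codeF f = c :=
  exists_forest_aux c.length k c le_rfl h

lemma isCode_append_inj {m : ℕ} {a a' x y : List ℕ} (ha : IsCode m a) (ha' : IsCode m a')
    (h : a ++ x = a' ++ y) : a = a' := by
  have key : ∀ {a a' : List ℕ} {x y : List ℕ}, IsCode m a → IsCode m a' →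
      a ++ x = a' ++ y → a.length ≤ a'.length → a = a' := by
    intro a a' x y ha ha' h hle
    have htk : a = a'.take a.length := by
      have h1 : (a ++ x).take a.length = a := by
        rw [List.take_append, List.take_length]
        simp
      have h2 : (a' ++ y).take a.length = a'.take a.length := by
        rw [List.take_append]
        have : a.length - a'.length = 0 := by omega
        simp [this]
      rw [← h2, ← h]
      exact h1.symm
    rcases eq_or_lt_of_le hle with heq | hlt
    · exact htk.trans (by rw [heq, List.take_length])
    · exfalso
      have := ha'.2 a.length hlt
      rw [← htk] at this
      have h2 := ha.1
      omega
  rcases le_total a.length a'.length with hle | hle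
  · exact key ha ha' h hle
  · exact (key ha' ha h.symm hle).symm

lemma codeF_nil_iff {f : List PTree} : codeF f = [] ↔ f = [] := by
  constructor
  · intro h
    match f with
    | [] => rfl
    | .node l :: ts => simp [codeF] at h
  · rintro rfl; simp [codeF]

lemma codeF_injective : Function.Injective codeF := by
  have key : ∀ (n : ℕ) (f g : List PTree), PTree.sizeList f ≤ n → codeF f = codeF g → f = g := by
    intro n
    induction n with
    | zero =>
        intro f g hf h
        match f, g with
        | [], g => exact (codeF_nil_iff.mp (by rw [← h]; simp [codeF])).symm
        | .node l :: ts, g => simp [PTree.sizeList, PTree.size] at hf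
    | succ n IH =>
        intro f g hf h
        match f, g with
        | [], g => exact (codeF_nil_iff.mp (by rw [← h]; simp [codeF])).symm
        | f, [] => exact codeF_nil_iff.mp (by rw [h]; simp [codeF])
        | .node l :: ts, .node l' :: ts' =>
          simp only [codeF, List.cons.injEq] at h
          obtain ⟨hm, happ⟩ := h
          have hc1 := isCode_codeF l
          have hc2 := isCode_codeF l'
          rw [← hm] at hc2
          have hll : codeF l = codeF l' := isCode_append_inj hc1 hc2 happ
          have hts : codeF ts = codeF ts' := by
            rw [hll] at happ
            exact List.append_cancel_left happ
          simp only [PTree.sizeList, PTree.size] at hf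
          have e1 : l = l' := IH l l' (by omega) hll
          have e2 : ts = ts' := IH ts ts' (by omega) hts
          rw [e1, e2]
  intro f g h
  exact key (PTree.sizeList f) f g le_rfl h

/-! ### The walk associated with a list and the cycle lemma -/

/-- The walk associated to the periodic extension of `c`, minus unit drift. -/
def S (c : List ℕ) (j : ℕ) : ℤ :=
  (∑ t ∈ Finset.range j, (c.getD (t % c.length) 0 : ℤ)) - j

lemma S_zero (c : List ℕ) : S c 0 = 0 := by simp [S]

lemma S_succ (c : List ℕ) (j : ℕ) :
    S c (j+1) = S c j + c.getD (j % c.length) 0 - 1 := by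
  simp only [S, Finset.sum_range_succ]
  push_cast
  ring

lemma sum_getD (l : List ℕ) : l.sum = ∑ i ∈ Finset.range l.length, l.getD i 0 := by
  induction l with
  | nil => simp
  | cons a t ih =>
      rw [List.sum_cons, List.length_cons, Finset.sum_range_succ', ih]
      simp
      omega

lemma S_length (c : List ℕ) : S c c.length = (c.sum : ℤ) - c.length := by
  simp only [S]
  congr 1
  rw [sum_getD c]
  push_cast
  refine (Finset.sum_congr rfl ?_)
  intro t ht
  rw [Nat.mod_eq_of_lt (Finset.mem_range.mp ht)]

section
variable {c : List ℕ} {k : ℕ}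

lemma S_add_length (hsum : c.sum + k = c.length) (j : ℕ) :
    S c (j + c.length) = S c j - k := by
  induction j with
  | zero => rw [Nat.zero_add, S_length, S_zero]; omega
  | succ j ih =>
      have : j + 1 + c.length = (j + c.length) + 1 := by omega
      rw [this, S_succ, ih, S_succ]
      rw [Nat.add_mod_right]
      ring

lemma S_step_ge (c : List ℕ) (j : ℕ) : S c j - 1 ≤ S c (j+1) := by
  rw [S_succ]
  have : (0:ℤ) ≤ c.getD (j % c.length) 0 := Int.ofNat_nonneg _
  omega

lemma S_mul_length (hsum : c.sum + k = c.length) (r : ℕ) :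
    S c (r * c.length) = -(r * k : ℕ) := by
  induction r with
  | zero => simp [S_zero]
  | succ r ih =>
      have : (r+1) * c.length = r * c.length + c.length := by ring
      rw [this, S_add_length hsum, ih]
      push_cast
      ring

lemma exists_S_le (hsum : c.sum + k = c.length) (hk : 1 ≤ k) (v : ℤ) :
    ∃ j, S c j ≤ v := by
  rcases le_or_gt 0 v with hv | hv
  · exact ⟨0, by rw [S_zero]; omega⟩
  · refine ⟨v.natAbs * c.length, ?_⟩
    rw [S_mul_length hsum]
    have : v.natAbs ≤ v.natAbs * k := Nat.le_mul_of_pos_right _ hk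
    omega

/-- Sum of a window of the periodic extension, in terms of the walk. -/
lemma window_sum (i p : ℕ) :
    (∑ t ∈ Finset.range p, (c.getD ((i + t) % c.length) 0 : ℤ)) = S c (i + p) - S c i + p := by
  induction p with
  | zero => simp
  | succ p ih =>
      rw [Finset.sum_range_succ, ih, show i + (p+1) = (i+p)+1 by omega, S_succ]
      push_cast
      ring

lemma take_sum_getD (l : List ℕ) (p : ℕ) (hp : p ≤ l.length) :
    (l.take p).sum = ∑ t ∈ Finset.range p, l.getD t 0 := by
  rw [sum_getD (l.take p), List.length_take, min_eq_left hp]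
  refine Finset.sum_congr rfl fun t ht => ?_
  have ht' := Finset.mem_range.mp ht
  rw [List.getD_eq_getElem?_getD, List.getD_eq_getElem?_getD, List.getElem?_take,
    if_pos ht']

lemma rotate_getD (i t : ℕ) (ht : t < c.length) (hi : i < c.length) :
    (c.rotate i).getD t 0 = c.getD ((i + t) % c.length) 0 := by
  have hlen : (c.rotate i).length = c.length := List.length_rotate c i
  have h1 : t < (c.rotate i).length := by omega
  have h2 : (t + i) % c.length < c.length := Nat.mod_lt _ (by omega)
  rw [show i + t = t + i by omega]
  rw [List.getD_eq_getElem?_getD, List.getD_eq_getElem?_getD,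
    List.getElem?_eq_getElem h1, List.getElem?_eq_getElem h2]
  simp only [Option.getD_some]
  exact (List.get_rotate c i ⟨t, h1⟩ : _)

/-- Characterization of codes among rotations, in terms of the walk. -/
lemma good_iff (hsum : c.sum + k = c.length) (i : ℕ) (hi : i < c.length) :
    IsCode k (c.rotate i) ↔ ∀ p < c.length, S c (i + c.length) < S c (i + p) := by
  have hlen : (c.rotate i).length = c.length := List.length_rotate c i
  have hsum' : (c.rotate i).sum = c.sum := (c.rotate_perm i).sum_eq
  constructor
  · rintro ⟨-, h2⟩ p hp
    have := h2 p (by omega)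
    have htk : ((c.rotate i).take p).sum = ∑ t ∈ Finset.range p, c.getD ((i + t) % c.length) 0 := by
      rw [take_sum_getD _ p (by omega)]
      exact Finset.sum_congr rfl fun t ht => rotate_getD i t (by
        have := Finset.mem_range.mp ht; omega) hi
    rw [htk] at this
    have hcast : ((p:ℤ)) < (∑ t ∈ Finset.range p, (c.getD ((i + t) % c.length) 0 : ℤ)) + k := by
      exact_mod_cast this
    rw [window_sum] at hcast
    rw [S_add_length hsum]
    omega
  · intro h
    refine ⟨by omega, fun p hp => ?_⟩
    rw [hlen] at hp
    have := h p hp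
    rw [S_add_length hsum] at this
    have htk : ((c.rotate i).take p).sum = ∑ t ∈ Finset.range p, c.getD ((i + t) % c.length) 0 := by
      rw [take_sum_getD _ p (by omega)]
      exact Finset.sum_congr rfl fun t ht => rotate_getD i t (by
        have := Finset.mem_range.mp ht; omega) hi
    rw [htk]
    have hw := window_sum (c := c) i p
    have : ((p:ℤ)) < (∑ t ∈ Finset.range p, (c.getD ((i + t) % c.length) 0 : ℤ)) + k := by
      rw [hw]; omega
    exact_mod_cast this

/-- Goodness as a strict-record property of the walk. -/
lemma good_iff_record (hsum : c.sum + k = c.length) (hk : 1 ≤ k) (i : ℕ) (hi : i < c.length) :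
    IsCode k (c.rotate i) ↔ ∀ m < i + c.length, S c (i + c.length) < S c m := by
  rw [good_iff hsum i hi]
  constructor
  · intro h m hm
    rcases le_or_gt i m with him | him
    · have : m = i + (m - i) := by omega
      rw [this]
      exact h _ (by omega)
    · have h1 : S c m = S c (m + c.length) + k := by rw [S_add_length hsum]; ring
      have h2 : m + c.length = i + (m + c.length - i) := by omega
      have h3 : m + c.length - i < c.length := by omega
      have := h _ h3
      rw [← h2] at this
      omega
  · intro h p hp
    exact h (i + p) (by omega)

/-- The cycle lemma: exactly `k` of the rotations of `c` are codes of `k`-tree forests. -/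
lemma cycle_lemma (hsum : c.sum + k = c.length) (hk : 1 ≤ k) :
    ((Finset.range c.length).filter (fun i => IsCode k (c.rotate i))).card = k := by
  have hNpos : 0 < c.length := by omega
  obtain ⟨jm, hjm_mem, hjm⟩ :=
    Finset.exists_min_image (Finset.range c.length) (S c) ⟨0, by simp [hNpos]⟩
  have hjmN : jm < c.length := Finset.mem_range.mp hjm_mem
  set μ₀ := S c jm with hμ₀
  have hμ₀0 : μ₀ ≤ 0 := by
    have := hjm 0 (by simp [hNpos])
    rw [S_zero] at this
    omega
  have hex : ∀ v : ℤ, ∃ j, S c j ≤ v := fun v => exists_S_le hsum hk v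
  classical
  have main : ((Finset.range c.length).filter (fun i => IsCode k (c.rotate i))).card
      = (Finset.Icc 1 k).card := by
    refine Finset.card_bij (fun a _ => (μ₀ - S c (a + c.length)).toNat) ?_ ?_ ?_
    · -- maps into Icc 1 k
      intro a ha
      rw [Finset.mem_filter, Finset.mem_range] at ha
      obtain ⟨haN, hgood⟩ := ha
      rw [good_iff_record hsum hk a haN] at hgood
      have h1 : S c (a + c.length) < μ₀ := hgood jm (by omega)
      have h2 : μ₀ - (k:ℤ) ≤ S c (a + c.length) := by
        have := hjm a (Finset.mem_range.mpr haN)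
        rw [S_add_length hsum]
        omega
      rw [Finset.mem_Icc]
      omega
    · -- injective
      intro a₁ ha₁ a₂ ha₂ heq
      rw [Finset.mem_filter, Finset.mem_range] at ha₁ ha₂
      obtain ⟨h1N, hg1⟩ := ha₁
      obtain ⟨h2N, hg2⟩ := ha₂
      rw [good_iff_record hsum hk _ h1N] at hg1
      rw [good_iff_record hsum hk _ h2N] at hg2
      have hv1 : S c (a₁ + c.length) < μ₀ := hg1 jm (by omega)
      have hv2 : S c (a₂ + c.length) < μ₀ := hg2 jm (by omega)
      have hveq : S c (a₁ + c.length) = S c (a₂ + c.length) := by omega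
      rcases lt_trichotomy a₁ a₂ with h | h | h
      · have := hg2 (a₁ + c.length) (by omega)
        omega
      · exact h
      · have := hg1 (a₂ + c.length) (by omega)
        omega
    · -- surjective
      intro r hr
      rw [Finset.mem_Icc] at hr
      set v : ℤ := μ₀ - r with hv
      have hvneg : v ≤ -1 := by omega
      set h := Nat.find (hex v) with hh
      have hhit : S c h ≤ v := Nat.find_spec (hex v)
      have hfirst : ∀ m < h, v < S c m := fun m hm => by
        have := Nat.find_min (hex v) hm
        omega
      have hh1 : 1 ≤ h := by
        rcases Nat.eq_zero_or_pos h with h0 | h0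
        · exfalso
          rw [h0, S_zero] at hhit
          omega
        · exact h0
      have hSh : S c h = v := by
        have h1 := hfirst (h-1) (by omega)
        have h2 := S_step_ge c (h-1)
        rw [show h - 1 + 1 = h by omega] at h2
        omega
      have hhN : c.length ≤ h := by
        by_contra hcon
        push_neg at hcon
        have := hjm h (Finset.mem_range.mpr hcon)
        omega
      have hh2N : h < 2 * c.length := by
        have hle : h ≤ jm + c.length := Nat.find_min' (hex v) (by
          rw [S_add_length hsum]
          omega)
        omega
      refine ⟨h - c.length, ?_, ?_⟩
      · rw [Finset.mem_filter, Finset.mem_range]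
        refine ⟨by omega, ?_⟩
        rw [good_iff_record hsum hk _ (by omega)]
        intro m hm
        rw [show h - c.length + c.length = h by omega] at hm ⊢
        rw [hSh]
        exact hfirst m hm
      · show (μ₀ - S c (h - c.length + c.length)).toNat = r
        rw [show h - c.length + c.length = h by omega, hSh]
        omega
  rw [main, Nat.card_Icc]
  omega

end

/-! ### The finite sets of lists and the core counting identity -/

def lists (N R : ℕ) : Finset (List ℕ) :=
  ((Fintype.piFinset fun _ : Fin N => Finset.range (R+1)).image List.ofFn).filter
    (fun l => l.sum = R)

lemma mem_lists {N R : ℕ} {l : List ℕ} : l ∈ lists N R ↔ l.length = N ∧ l.sum = R := by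
  rw [lists, Finset.mem_filter, Finset.mem_image]
  constructor
  · rintro ⟨⟨c, -, rfl⟩, h2⟩
    exact ⟨List.length_ofFn, h2⟩
  · rintro ⟨h1, h2⟩
    subst h1
    refine ⟨⟨l.get, ?_, List.ofFn_get l⟩, h2⟩
    rw [Fintype.mem_piFinset]
    intro i
    rw [Finset.mem_range, Nat.lt_succ_iff, ← h2]
    exact List.single_le_sum (fun _ _ => Nat.zero_le _) _ (l.get_mem _)

lemma core (μ : ℕ → ℝ) (k N R : ℕ) (hk : 1 ≤ k) (hNk : R + k = N) :
    (N : ℝ) * ∑ l ∈ (lists N R).filter (IsCode k), (l.map μ).prod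
      = (k : ℝ) * ∑ l ∈ lists N R, (l.map μ).prod := by
  classical
  symm
  have hw : ∀ (l : List ℕ) (i : ℕ), ((l.rotate i).map μ).prod = (l.map μ).prod := by
    intro l i
    rw [List.map_rotate]
    exact ((l.map μ).rotate_perm i).prod_eq
  have key : ∀ l ∈ lists N R,
      (k : ℝ) * (l.map μ).prod
        = ∑ i ∈ Finset.range N, (if IsCode k (l.rotate i) then (l.map μ).prod else 0) := by
    intro l hl
    rw [mem_lists] at hl
    have hcard := cycle_lemma (c := l) (k := k) (by omega) hk
    rw [hl.1] at hcard
    rw [← Finset.sum_filter, Finset.sum_const, nsmul_eq_mul, hcard]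
  calc (k : ℝ) * ∑ l ∈ lists N R, (l.map μ).prod
      = ∑ l ∈ lists N R, (k : ℝ) * (l.map μ).prod := by rw [Finset.mul_sum]
    _ = ∑ l ∈ lists N R, ∑ i ∈ Finset.range N,
          (if IsCode k (l.rotate i) then (l.map μ).prod else 0) :=
        Finset.sum_congr rfl key
    _ = ∑ i ∈ Finset.range N, ∑ l ∈ lists N R,
          (if IsCode k (l.rotate i) then (l.map μ).prod else 0) := Finset.sum_comm
    _ = ∑ i ∈ Finset.range N, ∑ l ∈ lists N R,
          (if IsCode k l then (l.map μ).prod else 0) := by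
        refine Finset.sum_congr rfl fun i hi => ?_
        have hiN := Finset.mem_range.mp hi
        refine Finset.sum_nbij' (fun l => l.rotate i) (fun l => l.rotate (N - i))
          ?_ ?_ ?_ ?_ ?_
        · intro l hl
          rw [mem_lists] at hl ⊢
          exact ⟨by rw [List.length_rotate, hl.1], by rw [(l.rotate_perm i).sum_eq, hl.2]⟩
        · intro l hl
          rw [mem_lists] at hl ⊢
          exact ⟨by rw [List.length_rotate, hl.1], by rw [(l.rotate_perm _).sum_eq, hl.2]⟩
        · intro l hl
          show (l.rotate i).rotate (N - i) = l
          rw [List.rotate_rotate, show i + (N - i) = N by omega,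
            ← (mem_lists.mp hl).1, List.rotate_length]
        · intro l hl
          show (l.rotate (N - i)).rotate i = l
          rw [List.rotate_rotate, show N - i + i = N by omega,
            ← (mem_lists.mp hl).1, List.rotate_length]
        · intro l hl
          rw [hw l i]
    _ = ∑ i ∈ Finset.range N, ∑ l ∈ (lists N R).filter (IsCode k), (l.map μ).prod := by
        refine Finset.sum_congr rfl fun i _ => ?_
        rw [Finset.sum_filter]
    _ = (N : ℝ) * ∑ l ∈ (lists N R).filter (IsCode k), (l.map μ).prod := by
        rw [Finset.sum_const, Finset.card_range, nsmul_eq_mul]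

/-! ### Bridges between forests, lists of trees and codes -/

lemma sizeList_map : ∀ L : List PTree, PTree.sizeList L = (L.map PTree.size).sum := by
  intro L
  induction L with
  | nil => simp [PTree.sizeList]
  | cons t ts ih => simp [PTree.sizeList, ih]

lemma weightList_map (μ : ℕ → ℝ) :
    ∀ L : List PTree, PTree.weightList μ L = (L.map (PTree.weight μ)).prod := by
  intro L
  induction L with
  | nil => simp [PTree.weightList]
  | cons t ts ih => simp [PTree.weightList, ih]

lemma sum_size_ofFn {k : ℕ} (f : Fin k → PTree) :
    PTree.sizeList (List.ofFn f) = ∑ i, (f i).size := by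
  rw [sizeList_map, List.map_ofFn, List.sum_ofFn]
  rfl

lemma prod_weight_ofFn (μ : ℕ → ℝ) {k : ℕ} (f : Fin k → PTree) :
    PTree.weightList μ (List.ofFn f) = ∏ i, (f i).weight μ := by
  rw [weightList_map, List.map_ofFn, List.prod_ofFn]
  rfl

/-- The tsum over forests of `k` trees equals the finite sum over codes. -/
lemma forest_tsum (μ : ℕ → ℝ) (k N R : ℕ) (hNk : R + k = N) :
    (∑' f : Fin k → PTree, if (∑ i, (f i).size) = N then ∏ i, (f i).weight μ else 0)
      = ∑ l ∈ (lists N R).filter (IsCode k), (l.map μ).prod := by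
  classical
  set F : (Fin k → PTree) → ℝ :=
    fun f => if (∑ i, (f i).size) = N then ∏ i, (f i).weight μ else 0 with hF
  set G : List ℕ → ℝ :=
    fun l => if l.length = N ∧ IsCode k l then (l.map μ).prod else 0 with hG
  have bridge : ∀ f : Fin k → PTree, F f = G (codeF (List.ofFn f)) := by
    intro f
    have hlen : (codeF (List.ofFn f)).length = PTree.sizeList (List.ofFn f) :=
      length_codeF _
    have hcode : IsCode k (codeF (List.ofFn f)) := by
      have := isCode_codeF (List.ofFn f)
      rwa [List.length_ofFn] at this
    have hsz : PTree.sizeList (List.ofFn f) = ∑ i, (f i).size := sum_size_ofFn f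
    rw [hF, hG]
    dsimp only
    by_cases hc : (∑ i, (f i).size) = N
    · rw [if_pos hc, if_pos ⟨by omega, hcode⟩, ← weightList_codeF, prod_weight_ofFn]
    · rw [if_neg hc, if_neg (by
        rintro ⟨h1, -⟩
        exact hc (by omega))]
  have henc : ∀ x : Function.support G, ∃ f : Fin k → PTree, codeF (List.ofFn f) = (x : List ℕ) := by
    rintro ⟨l, hl⟩
    have hcond : l.length = N ∧ IsCode k l := by
      by_contra hcon
      exact hl (by rw [hG]; exact if_neg hcon)
    obtain ⟨L, hL1, hL2⟩ := exists_forest hcond.2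
    subst hL1
    exact ⟨fun j => L.get j, by rw [List.ofFn_get]; exact hL2⟩
  choose dec hdec using henc
  have hGF : ∀ x : Function.support G, F (dec x) = G x := by
    intro x
    rw [bridge (dec x), hdec x]
  refine Eq.trans (tsum_eq_tsum_of_ne_zero_bij dec ?_ ?_ hGF) ?_
  · intro x y hxy
    have : codeF (List.ofFn (dec x)) = codeF (List.ofFn (dec y)) := by rw [hxy]
    rw [hdec x, hdec y] at this
    exact Subtype.ext this
  · intro f hf
    have hne : G (codeF (List.ofFn f)) ≠ 0 := by
      rw [← bridge f]; exact hf
    refine ⟨⟨codeF (List.ofFn f), hne⟩, ?_⟩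
    have := hdec ⟨codeF (List.ofFn f), hne⟩
    exact List.ofFn_injective (codeF_injective this)
  · -- tsum G = finite sum
    rw [tsum_eq_sum (s := (lists N R).filter (IsCode k)) (f := G) ?_]
    · refine Finset.sum_congr rfl fun l hl => ?_
      rw [Finset.mem_filter, mem_lists] at hl
      rw [hG]
      exact if_pos ⟨hl.1.1, hl.2⟩
    · intro l hl
      rw [hG]
      dsimp only
      rw [if_neg]
      rintro ⟨h1, h2⟩
      exact hl (by
        rw [Finset.mem_filter, mem_lists]
        exact ⟨⟨h1, by have := h2.1; omega⟩, h2⟩)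

/-- The tsum over sequences equals the finite sum over all lists. -/
lemma seq_tsum (μ : ℕ → ℝ) (N R : ℕ) :
    (∑' c : Fin N → ℕ, if (∑ i, c i) = R then ∏ i, μ (c i) else 0)
      = ∑ l ∈ lists N R, (l.map μ).prod := by
  classical
  rw [tsum_eq_sum (s := Fintype.piFinset fun _ : Fin N => Finset.range (R+1)) ?_]
  · rw [lists, Finset.filter_image]
    rw [Finset.sum_image (fun a _ b _ h => List.ofFn_injective h)]
    rw [Finset.sum_filter]
    refine Finset.sum_congr rfl fun c _ => ?_
    rw [List.sum_ofFn, List.map_ofFn, List.prod_ofFn]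
    rfl
  · intro c hc
    rw [Fintype.mem_piFinset] at hc
    push_neg at hc
    obtain ⟨i, hi⟩ := hc
    rw [Finset.mem_range] at hi
    rw [if_neg]
    intro hsum
    have : c i ≤ R := hsum ▸ Finset.single_le_sum (fun _ _ => Nat.zero_le _) (Finset.mem_univ i)
    omega

/-- The main identity, for forests. -/
lemma main_identity (μ : ℕ → ℝ) (k N R : ℕ) (hk : 1 ≤ k) (hNk : R + k = N) :
    (∑' f : Fin k → PTree, if (∑ i, (f i).size) = N then ∏ i, (f i).weight μ else 0)
      = ((k : ℝ) / (N : ℝ)) *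
          ∑' c : Fin N → ℕ, (if ∑ i, c i = R then ∏ i, μ (c i) else 0) := by
  rw [forest_tsum μ k N R hNk, seq_tsum μ N R]
  have hN : (N : ℝ) ≠ 0 := by
    have : 0 < N := by omega
    positivity
  have hc := core μ k N R hk hNk
  rw [div_mul_eq_mul_div, eq_div_iff hN]
  linarith [hc]

end OtterDwassAux

open OtterDwassAux in
theorem otter_dwass_cyclic_lemma
    (μ : ℕ → ℝ) (hnn : ∀ n, 0 ≤ μ n) (hsum : ∑' n : ℕ, μ n = 1)
    (hmean : ∑' n : ℕ, (n : ℝ) * μ n = 1) (hcrit : μ 1 < 1)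
    (d : ℕ) (hdpos : 0 < d)
    (hddvd : ∀ m : ℕ, μ m ≠ 0 → d ∣ m)
    (hdgcd : ∀ e : ℕ, (∀ m : ℕ, μ m ≠ 0 → e ∣ m) → e ∣ d) :
    (∀ n : ℕ,
      (∑' t : PTree, if t.size = 1 + d * n then t.weight μ else 0)
        = (1 / (1 + d * n : ℝ)) *
          ∑' c : Fin (1 + d * n) → ℕ,
            (if ∑ i, c i = d * n then ∏ i, μ (c i) else 0)) ∧
    (∀ k : ℕ, 1 ≤ k → ∀ n : ℕ,
      (∑' f : Fin k → PTree, if ∑ i, (f i).size = k + d * n then ∏ i, (f i).weight μ else 0)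
        = ((k : ℝ) / (k + d * n : ℝ)) *
          ∑' c : Fin (k + d * n) → ℕ,
            (if ∑ i, c i = d * n then ∏ i, μ (c i) else 0)) := by
  have part2 : ∀ k : ℕ, 1 ≤ k → ∀ n : ℕ,
      (∑' f : Fin k → PTree, if ∑ i, (f i).size = k + d * n then ∏ i, (f i).weight μ else 0)
        = ((k : ℝ) / (k + d * n : ℝ)) *
          ∑' c : Fin (k + d * n) → ℕ,
            (if ∑ i, c i = d * n then ∏ i, μ (c i) else 0) := by
    intro k hk n
    have := main_identity μ k (k + d * n) (d * n) hk (by omega)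
    rw [this]
    congr 1
    push_cast
    ring
  refine ⟨?_, part2⟩
  intro n
  have h2 := part2 1 le_rfl n
  have htsum : (∑' f : Fin 1 → PTree,
      if ∑ i, (f i).size = 1 + d * n then ∏ i, (f i).weight μ else 0)
      = ∑' t : PTree, if t.size = 1 + d * n then t.weight μ else 0 := by
    refine Eq.trans ?_ ((Equiv.funUnique (Fin 1) PTree).tsum_eq
      (fun t => if t.size = 1 + d * n then t.weight μ else 0))
    refine tsum_congr fun f => ?_
    simp [Equiv.funUnique, Fin.sum_univ_one, Fin.prod_univ_one]
  rw [← htsum, h2]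
  congr 1
  push_cast
  ring
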